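/- For any real diagonal matrix Ψ, the matrix C = I_N + J_N Ψ has rank at least N/2. -/

import Mathlib

open Matrix

/-- The `N × N` exchange (counter-identity) matrix: `(J_N)_{ij} = 1` if `i + j = N - 1`,
and `0` otherwise. -/
noncomputable def exchMat (N : ℕ) : Matrix (Fin N) (Fin N) ℝ :=
  Matrix.of fun i j => if (i : ℕ) + (j : ℕ) = N - 1 then (1 : ℝ) else 0

lemma exch_mulVec (N : ℕ) (w : Fin N → ℝ) (j : Fin N) :
    (exchMat N).mulVec w j = w ⟨N - 1 - j, by omega⟩ := by
  have hj := j.isLt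
  simp only [exchMat, mulVec, dotProduct, of_apply, ite_mul, one_mul, zero_mul]
  rw [show (∑ k : Fin N, if (j : ℕ) + (k : ℕ) = N - 1 then w k else 0)
      = ∑ k : Fin N, if k = (⟨N - 1 - j, by omega⟩ : Fin N) then w k else 0 from
    Finset.sum_congr rfl fun k _ => by
      congr 1
      simp only [Fin.ext_iff, eq_iff_iff]
      omega]
  simp

/-- For any real diagonal matrix `Ψ`, the matrix `C = I_N + J_N Ψ` has rank at least `N/2`. -/
theorem stmt4 (N : ℕ) (hN : 0 < N) (hNe : Even N) (ψ : Fin N → ℝ) :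
    N / 2 ≤ ((1 : Matrix (Fin N) (Fin N) ℝ) + exchMat N * Matrix.diagonal ψ).rank := by
  set C := (1 : Matrix (Fin N) (Fin N) ℝ) + exchMat N * Matrix.diagonal ψ with hC
  have key : ∀ (v : Fin N → ℝ) (j : Fin N),
      C.mulVec v j = v j + ψ ⟨N - 1 - j, by omega⟩ * v ⟨N - 1 - j, by omega⟩ := by
    intro v j
    rw [hC, add_mulVec, one_mulVec, ← mulVec_mulVec]
    have : (Matrix.diagonal ψ).mulVec v = fun k => ψ k * v k := by
      funext k; rw [mulVec_diagonal]
    rw [this]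
    simp [exch_mulVec]
  -- the restriction map from the kernel to the first half of coordinates
  let L : LinearMap.ker C.mulVecLin →ₗ[ℝ] (Fin (N / 2) → ℝ) :=
    { toFun := fun x k => x.1 (Fin.castLE (by omega) k)
      map_add' := fun x y => rfl
      map_smul' := fun c x => rfl }
  have hL : Function.Injective L := by
    rw [← LinearMap.ker_eq_bot, LinearMap.ker_eq_bot']
    intro x hx
    ext j
    have hker : C.mulVec x.1 = 0 := x.2
    have hhalf : ∀ k : Fin N, (k : ℕ) < N / 2 → x.1 k = 0 := by
      intro k hk
      have := congrFun hx ⟨k, hk⟩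
      exact this
    by_cases hj : (j : ℕ) < N / 2
    · simpa using hhalf j hj
    · obtain ⟨m, hm⟩ := hNe
      have hj2 : (N - 1 - (j : ℕ)) < N / 2 := by
        have := j.isLt
        omega
      have h0 : x.1 ⟨N - 1 - j, by omega⟩ = 0 := hhalf _ hj2
      have := congrFun hker j
      rw [key x.1 j, h0] at this
      simpa using this
  have hkerle : Module.finrank ℝ (LinearMap.ker C.mulVecLin) ≤ N / 2 := by
    have := LinearMap.finrank_le_finrank_of_injective hL
    simpa using this
  have hrn := LinearMap.finrank_range_add_finrank_ker C.mulVecLin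
  have hdim : Module.finrank ℝ (Fin N → ℝ) = N := by simp
  rw [hdim] at hrn
  have hrank : C.rank = Module.finrank ℝ (LinearMap.range C.mulVecLin) := rfl
  obtain ⟨m, hm⟩ := hNe
  rw [hrank]
  omega
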